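/- If a density matrix $\rho$ on $\mathbb{C}^2\otimes\mathbb{C}^d$ satisfies the inequality $\langle 2I_2\otimes I_d + (2-d)I_2\otimes B_1 + \sum_{k=2}^{d-1} 2I_2\otimes B_k + dA_3\otimes B_1\rangle_\rho \geq \big(\langle dI_2\otimes B_1 + 2A_3\otimes I_d + (2-d)A_3\otimes B_1 + \sum_{k=2}^{d-1} 2A_3\otimes B_k\rangle_\rho^2 + d^2\langle A_1\otimes B_d + A_2\otimes B_{d+1}\rangle_\rho^2\big)^{1/2}$ for all $A_i = U\sigma_iU^\dagger$, $B_j = V\lambda_jV^\dagger$ over all unitaries $U$ ($2\times 2$) and $V$ ($d\times d$), then the partial transpose $\rho^{T_1}$ is positive semidefinite (i.e., every NPT state violates the inequality for some choice of $U,V$). -/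

import Mathlib

set_option maxRecDepth 8000
set_option maxHeartbeats 1000000

open Matrix Kronecker
open scoped ComplexOrder

noncomputable section

abbrev M2 : Type := Matrix (Fin 2) (Fin 2) ℂ

def sig1 : M2 := Matrix.single 0 1 1 + Matrix.single 1 0 1
def sig2 : M2 := Complex.I • Matrix.single 0 1 1 - Complex.I • Matrix.single 1 0 1
def sig3 : M2 := Matrix.single 0 0 1 - Matrix.single 1 1 1

/-- partial transpose on the first (2-dimensional) factor -/
def PT {d : ℕ} (ρ : Matrix (Fin 2 × Fin d) (Fin 2 × Fin d) ℂ) :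
    Matrix (Fin 2 × Fin d) (Fin 2 × Fin d) ℂ :=
  fun p q => ρ (q.1, p.2) (p.1, q.2)

def expval {n : Type} [Fintype n] (ρ M : Matrix n n ℂ) : ℝ := ((ρ * M).trace).re

def proj {n : Type} (ψ : n → ℂ) : Matrix n n ℂ := Matrix.vecMulVec ψ (star ψ)

/-- λ_k = |0⟩⟨0| - |k⟩⟨k| for 1 ≤ k ≤ d-1 -/
def lamK (d : ℕ) (hd : 2 ≤ d) (k : Fin d) : Matrix (Fin d) (Fin d) ℂ :=
  Matrix.single ⟨0, by omega⟩ ⟨0, by omega⟩ 1 - Matrix.single k k 1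

/-- λ_d = |0⟩⟨1| + |1⟩⟨0| -/
def lamD (d : ℕ) (hd : 2 ≤ d) : Matrix (Fin d) (Fin d) ℂ :=
  Matrix.single ⟨0, by omega⟩ ⟨1, by omega⟩ 1 + Matrix.single ⟨1, by omega⟩ ⟨0, by omega⟩ 1

/-- λ_{d+1} = i|0⟩⟨1| - i|1⟩⟨0| -/
def lamD1 (d : ℕ) (hd : 2 ≤ d) : Matrix (Fin d) (Fin d) ℂ :=
  Complex.I • Matrix.single ⟨0, by omega⟩ ⟨1, by omega⟩ 1
    - Complex.I • Matrix.single ⟨1, by omega⟩ ⟨0, by omega⟩ 1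

/-- A_i = U σ_i U† -/
def dA (U : M2) (i : Fin 3) : M2 := U * (![sig1, sig2, sig3] i) * Uᴴ

/-- 2 I⊗I + (2-d) I⊗B₁ + Σ_{k=2}^{d-1} 2 I⊗B_k + d A₃⊗B₁ -/
def DObs0 (d : ℕ) (hd : 2 ≤ d) (U : M2) (V : Matrix (Fin d) (Fin d) ℂ) :
    Matrix (Fin 2 × Fin d) (Fin 2 × Fin d) ℂ :=
  (2:ℂ) • ((1:M2) ⊗ₖ (1 : Matrix (Fin d) (Fin d) ℂ))
    + ((2:ℂ) - (d:ℂ)) • ((1:M2) ⊗ₖ (V * lamK d hd ⟨1, by omega⟩ * Vᴴ))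
    + (∑ k ∈ Finset.univ.filter (fun k : Fin d => 2 ≤ (k : ℕ)),
        (2:ℂ) • ((1:M2) ⊗ₖ (V * lamK d hd k * Vᴴ)))
    + (d:ℂ) • (dA U 2 ⊗ₖ (V * lamK d hd ⟨1, by omega⟩ * Vᴴ))

/-- d I⊗B₁ + 2 A₃⊗I + (2-d) A₃⊗B₁ + Σ_{k=2}^{d-1} 2 A₃⊗B_k -/
def DObs1 (d : ℕ) (hd : 2 ≤ d) (U : M2) (V : Matrix (Fin d) (Fin d) ℂ) :
    Matrix (Fin 2 × Fin d) (Fin 2 × Fin d) ℂ :=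
  (d:ℂ) • ((1:M2) ⊗ₖ (V * lamK d hd ⟨1, by omega⟩ * Vᴴ))
    + (2:ℂ) • (dA U 2 ⊗ₖ (1 : Matrix (Fin d) (Fin d) ℂ))
    + ((2:ℂ) - (d:ℂ)) • (dA U 2 ⊗ₖ (V * lamK d hd ⟨1, by omega⟩ * Vᴴ))
    + (∑ k ∈ Finset.univ.filter (fun k : Fin d => 2 ≤ (k : ℕ)),
        (2:ℂ) • (dA U 2 ⊗ₖ (V * lamK d hd k * Vᴴ)))

/-- A₁⊗B_d + A₂⊗B_{d+1} -/
def DObs2 (d : ℕ) (hd : 2 ≤ d) (U : M2) (V : Matrix (Fin d) (Fin d) ℂ) :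
    Matrix (Fin 2 × Fin d) (Fin 2 × Fin d) ℂ :=
  dA U 0 ⊗ₖ (V * lamD d hd * Vᴴ) + dA U 1 ⊗ₖ (V * lamD1 d hd * Vᴴ)

/-! ### Auxiliary lemmas -/

section Aux

variable {d : ℕ}

lemma one_eq_sum_std (d : ℕ) : (1 : Matrix (Fin d) (Fin d) ℂ) = ∑ k : Fin d, Matrix.single k k 1 := by
  ext i j
  rw [Matrix.sum_apply]
  simp [Matrix.single, Matrix.one_apply, ite_and, Finset.sum_ite_eq]

lemma filter_not_eq (d : ℕ) (hd : 2 ≤ d) :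
    Finset.univ.filter (fun k : Fin d => ¬ 2 ≤ (k:ℕ)) = {⟨0, by omega⟩, ⟨1, by omega⟩} := by
  ext k
  simp only [Finset.mem_filter, Finset.mem_univ, true_and, Finset.mem_insert, Finset.mem_singleton]
  constructor
  · intro hk
    interval_cases h : (k : ℕ)
    · left; exact Fin.ext h
    · right; exact Fin.ext h
  · rintro (rfl | rfl) <;> simp

lemma sum_lamK (d : ℕ) (hd : 2 ≤ d) :
    ∑ k ∈ Finset.univ.filter (fun k : Fin d => 2 ≤ (k:ℕ)), lamK d hd k
      = ((d:ℂ) - 2) • Matrix.single ⟨0, by omega⟩ ⟨0, by omega⟩ 1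
        - ((1 : Matrix (Fin d) (Fin d) ℂ)
            - Matrix.single ⟨0, by omega⟩ ⟨0, by omega⟩ 1
            - Matrix.single ⟨1, by omega⟩ ⟨1, by omega⟩ 1) := by
  have hsplit := Finset.sum_filter_add_sum_filter_not Finset.univ (fun k : Fin d => 2 ≤ (k:ℕ)) (lamK d hd)
  have huniv : ∑ k : Fin d, lamK d hd k
      = (d:ℂ) • Matrix.single ⟨0, by omega⟩ ⟨0, by omega⟩ 1 - 1 := by
    unfold lamK
    rw [Finset.sum_sub_distrib, Finset.sum_const, ← one_eq_sum_std]
    simp [Finset.card_univ, ← Nat.cast_smul_eq_nsmul ℂ]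
  have hnot : ∑ k ∈ Finset.univ.filter (fun k : Fin d => ¬ 2 ≤ (k:ℕ)), lamK d hd k
      = lamK d hd ⟨0, by omega⟩ + lamK d hd ⟨1, by omega⟩ := by
    rw [filter_not_eq d hd, Finset.sum_insert (by simp [Fin.ext_iff]), Finset.sum_singleton]
  have h0 : lamK d hd ⟨0, by omega⟩ = 0 := by unfold lamK; simp
  rw [← hsplit] at huniv
  rw [hnot, h0] at huniv
  have goal := eq_sub_of_add_eq huniv
  rw [goal]
  unfold lamK
  module

lemma kron_sum_right {ι : Type*} (A : M2) (t : Finset ι) (f : ι → Matrix (Fin d) (Fin d) ℂ) :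
    A ⊗ₖ (∑ k ∈ t, f k) = ∑ k ∈ t, A ⊗ₖ f k := by
  ext ⟨a,b⟩ ⟨c,e⟩
  rw [Matrix.sum_apply]
  simp only [kroneckerMap_apply]
  rw [Matrix.sum_apply, Finset.mul_sum]

lemma kron_conjT (A : M2) (B : Matrix (Fin d) (Fin d) ℂ) :
    (A ⊗ₖ B)ᴴ = Aᴴ ⊗ₖ Bᴴ := by
  ext ⟨a,b⟩ ⟨c,e⟩
  simp [conjTranspose_apply, kroneckerMap_apply, StarMul.star_mul, mul_comm]

lemma conj_kron {U : M2} {V : Matrix (Fin d) (Fin d) ℂ} (A : M2) (B : Matrix (Fin d) (Fin d) ℂ) :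
    (U * A * Uᴴ) ⊗ₖ (V * B * Vᴴ) = (U ⊗ₖ V) * (A ⊗ₖ B) * (U ⊗ₖ V)ᴴ := by
  rw [kron_conjT, ← Matrix.mul_kronecker_mul, ← Matrix.mul_kronecker_mul]

lemma kron_unitary {U : M2} {V : Matrix (Fin d) (Fin d) ℂ}
    (hU : U ∈ Matrix.unitaryGroup (Fin 2) ℂ) (hV : V ∈ Matrix.unitaryGroup (Fin d) ℂ) :
    (U ⊗ₖ V) ∈ Matrix.unitaryGroup (Fin 2 × Fin d) ℂ := by
  rw [Matrix.mem_unitaryGroup_iff]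
  have hU' : U * star U = 1 := Matrix.mem_unitaryGroup_iff.mp hU
  have hV' : V * star V = 1 := Matrix.mem_unitaryGroup_iff.mp hV
  calc (U ⊗ₖ V) * star (U ⊗ₖ V) = (U ⊗ₖ V) * (Uᴴ ⊗ₖ Vᴴ) := by
        rw [Matrix.star_eq_conjTranspose, kron_conjT]
    _ = (U * Uᴴ) ⊗ₖ (V * Vᴴ) := by rw [Matrix.mul_kronecker_mul]
    _ = 1 := by
        rw [← Matrix.star_eq_conjTranspose U, ← Matrix.star_eq_conjTranspose V, hU', hV',
          Matrix.one_kronecker_one]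

lemma trace_mul_kron_std (A : Matrix (Fin 2 × Fin d) (Fin 2 × Fin d) ℂ)
    (i j : Fin 2) (k l : Fin d) :
    (A * (Matrix.single i j (1:ℂ) ⊗ₖ Matrix.single k l (1:ℂ))).trace
      = A (j, l) (i, k) := by
  classical
  simp only [Matrix.trace, Matrix.diag, Matrix.mul_apply, kroneckerMap_apply,
    Matrix.single, Matrix.of_apply, Fintype.sum_prod_type]
  simp [ite_and, Finset.sum_ite_eq, mul_ite, ite_mul]

/-- N0 identity -/
lemma N0_eq (d : ℕ) (hd : 2 ≤ d) :
    (2:ℂ) • ((1:M2) ⊗ₖ (1 : Matrix (Fin d) (Fin d) ℂ))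
    + ((2:ℂ) - (d:ℂ)) • ((1:M2) ⊗ₖ lamK d hd ⟨1, by omega⟩)
    + (∑ k ∈ Finset.univ.filter (fun k : Fin d => 2 ≤ (k : ℕ)),
        (2:ℂ) • ((1:M2) ⊗ₖ lamK d hd k))
    + (d:ℂ) • (sig3 ⊗ₖ lamK d hd ⟨1, by omega⟩)
    = (2*(d:ℂ)) • ((Matrix.single 0 0 1 : M2) ⊗ₖ Matrix.single ⟨0, by omega⟩ ⟨0, by omega⟩ 1
        + (Matrix.single 1 1 1 : M2) ⊗ₖ Matrix.single ⟨1, by omega⟩ ⟨1, by omega⟩ 1) := by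
  have hs : ∑ k ∈ Finset.univ.filter (fun k : Fin d => 2 ≤ (k : ℕ)),
        (2:ℂ) • ((1:M2) ⊗ₖ lamK d hd k)
      = (2:ℂ) • ((1:M2) ⊗ₖ (∑ k ∈ Finset.univ.filter (fun k : Fin d => 2 ≤ (k : ℕ)), lamK d hd k)) := by
    rw [kron_sum_right, Finset.smul_sum]
  rw [hs, sum_lamK d hd]
  ext ⟨a,b⟩ ⟨c,e⟩
  fin_cases a <;> fin_cases c <;>
    simp [lamK, sig3, Matrix.single, Matrix.one_apply, kroneckerMap_apply,
      Matrix.sub_apply, Matrix.add_apply, Matrix.smul_apply, smul_eq_mul] <;>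
    split_ifs <;> simp_all <;> ring

/-- N1 identity -/
lemma N1_eq (d : ℕ) (hd : 2 ≤ d) :
    (d:ℂ) • ((1:M2) ⊗ₖ lamK d hd ⟨1, by omega⟩)
    + (2:ℂ) • (sig3 ⊗ₖ (1 : Matrix (Fin d) (Fin d) ℂ))
    + ((2:ℂ) - (d:ℂ)) • (sig3 ⊗ₖ lamK d hd ⟨1, by omega⟩)
    + (∑ k ∈ Finset.univ.filter (fun k : Fin d => 2 ≤ (k : ℕ)),
        (2:ℂ) • (sig3 ⊗ₖ lamK d hd k))
    = (2*(d:ℂ)) • ((Matrix.single 0 0 1 : M2) ⊗ₖ Matrix.single ⟨0, by omega⟩ ⟨0, by omega⟩ 1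
        - (Matrix.single 1 1 1 : M2) ⊗ₖ Matrix.single ⟨1, by omega⟩ ⟨1, by omega⟩ 1) := by
  have hs : ∑ k ∈ Finset.univ.filter (fun k : Fin d => 2 ≤ (k : ℕ)),
        (2:ℂ) • (sig3 ⊗ₖ lamK d hd k)
      = (2:ℂ) • (sig3 ⊗ₖ (∑ k ∈ Finset.univ.filter (fun k : Fin d => 2 ≤ (k : ℕ)), lamK d hd k)) := by
    rw [kron_sum_right, Finset.smul_sum]
  rw [hs, sum_lamK d hd]
  ext ⟨a,b⟩ ⟨c,e⟩
  fin_cases a <;> fin_cases c <;>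
    simp [lamK, sig3, Matrix.single, Matrix.one_apply, kroneckerMap_apply,
      Matrix.sub_apply, Matrix.add_apply, Matrix.smul_apply, smul_eq_mul] <;>
    split_ifs <;> simp_all <;> ring

/-- N2 identity -/
lemma N2_eq (d : ℕ) (hd : 2 ≤ d) :
    sig1 ⊗ₖ lamD d hd + sig2 ⊗ₖ lamD1 d hd
    = (2:ℂ) • ((Matrix.single 0 1 1 : M2) ⊗ₖ Matrix.single ⟨1, by omega⟩ ⟨0, by omega⟩ 1
        + (Matrix.single 1 0 1 : M2) ⊗ₖ Matrix.single ⟨0, by omega⟩ ⟨1, by omega⟩ 1) := by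
  ext ⟨a,b⟩ ⟨c,e⟩
  fin_cases a <;> fin_cases c <;>
    simp [sig1, sig2, lamD, lamD1, Matrix.single, kroneckerMap_apply, Fin.ext_iff,
      Matrix.sub_apply, Matrix.add_apply, Matrix.smul_apply, smul_eq_mul] <;>
    ring_nf <;>
    simp [Complex.I_sq] <;>
    split_ifs <;> first | ring | (exfalso; omega)

lemma DObs0_eq (d : ℕ) (hd : 2 ≤ d) (U : M2) (V : Matrix (Fin d) (Fin d) ℂ)
    (hU : U ∈ Matrix.unitaryGroup (Fin 2) ℂ) (hV : V ∈ Matrix.unitaryGroup (Fin d) ℂ) :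
    DObs0 d hd U V = (U ⊗ₖ V) *
      ((2*(d:ℂ)) • ((Matrix.single 0 0 1 : M2) ⊗ₖ Matrix.single ⟨0, by omega⟩ ⟨0, by omega⟩ 1
        + (Matrix.single 1 1 1 : M2) ⊗ₖ Matrix.single ⟨1, by omega⟩ ⟨1, by omega⟩ 1))
      * (U ⊗ₖ V)ᴴ := by
  have hU1 : U * Uᴴ = 1 := by
    simpa [Matrix.star_eq_conjTranspose] using Matrix.mem_unitaryGroup_iff.mp hU
  have hV1 : V * Vᴴ = 1 := by
    simpa [Matrix.star_eq_conjTranspose] using Matrix.mem_unitaryGroup_iff.mp hV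
  have key : ∀ (A : M2) (B : Matrix (Fin d) (Fin d) ℂ),
      (U * A * Uᴴ) ⊗ₖ (V * B * Vᴴ) = (U ⊗ₖ V) * (A ⊗ₖ B) * (U ⊗ₖ V)ᴴ := fun A B => conj_kron A B
  have e1 : ∀ B, (1:M2) ⊗ₖ (V * B * Vᴴ) = (U ⊗ₖ V) * ((1:M2) ⊗ₖ B) * (U ⊗ₖ V)ᴴ := by
    intro B
    conv_lhs => rw [show (1:M2) = U * 1 * Uᴴ by rw [mul_one, hU1]]
    exact key 1 B
  have e0 : (1:M2) ⊗ₖ (1 : Matrix (Fin d) (Fin d) ℂ)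
      = (U ⊗ₖ V) * ((1:M2) ⊗ₖ (1 : Matrix (Fin d) (Fin d) ℂ)) * (U ⊗ₖ V)ᴴ := by
    conv_lhs => rw [show (1 : Matrix (Fin d) (Fin d) ℂ) = V * 1 * Vᴴ by rw [mul_one, hV1]]
    exact e1 1
  have e3 : ∀ B, dA U 2 ⊗ₖ (V * B * Vᴴ) = (U ⊗ₖ V) * (sig3 ⊗ₖ B) * (U ⊗ₖ V)ᴴ := by
    intro B
    have : dA U 2 = U * sig3 * Uᴴ := by simp [dA]
    rw [this]; exact key sig3 B
  rw [← N0_eq d hd]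
  unfold DObs0
  conv_lhs => rw [e0, e3]
  conv_lhs => simp only [e1]
  simp only [Matrix.mul_add, Matrix.add_mul, Matrix.mul_smul, Matrix.smul_mul,
    Finset.mul_sum, Finset.sum_mul]

lemma DObs1_eq (d : ℕ) (hd : 2 ≤ d) (U : M2) (V : Matrix (Fin d) (Fin d) ℂ)
    (hU : U ∈ Matrix.unitaryGroup (Fin 2) ℂ) (hV : V ∈ Matrix.unitaryGroup (Fin d) ℂ) :
    DObs1 d hd U V = (U ⊗ₖ V) *
      ((2*(d:ℂ)) • ((Matrix.single 0 0 1 : M2) ⊗ₖ Matrix.single ⟨0, by omega⟩ ⟨0, by omega⟩ 1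
        - (Matrix.single 1 1 1 : M2) ⊗ₖ Matrix.single ⟨1, by omega⟩ ⟨1, by omega⟩ 1))
      * (U ⊗ₖ V)ᴴ := by
  have hU1 : U * Uᴴ = 1 := by
    simpa [Matrix.star_eq_conjTranspose] using Matrix.mem_unitaryGroup_iff.mp hU
  have hV1 : V * Vᴴ = 1 := by
    simpa [Matrix.star_eq_conjTranspose] using Matrix.mem_unitaryGroup_iff.mp hV
  have key : ∀ (A : M2) (B : Matrix (Fin d) (Fin d) ℂ),
      (U * A * Uᴴ) ⊗ₖ (V * B * Vᴴ) = (U ⊗ₖ V) * (A ⊗ₖ B) * (U ⊗ₖ V)ᴴ := fun A B => conj_kron A B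
  have e1 : ∀ B, (1:M2) ⊗ₖ (V * B * Vᴴ) = (U ⊗ₖ V) * ((1:M2) ⊗ₖ B) * (U ⊗ₖ V)ᴴ := by
    intro B
    conv_lhs => rw [show (1:M2) = U * 1 * Uᴴ by rw [mul_one, hU1]]
    exact key 1 B
  have e3 : ∀ B, dA U 2 ⊗ₖ (V * B * Vᴴ) = (U ⊗ₖ V) * (sig3 ⊗ₖ B) * (U ⊗ₖ V)ᴴ := by
    intro B
    have : dA U 2 = U * sig3 * Uᴴ := by simp [dA]
    rw [this]; exact key sig3 B
  have e2 : dA U 2 ⊗ₖ (1 : Matrix (Fin d) (Fin d) ℂ)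
      = (U ⊗ₖ V) * (sig3 ⊗ₖ (1 : Matrix (Fin d) (Fin d) ℂ)) * (U ⊗ₖ V)ᴴ := by
    conv_lhs => rw [show (1 : Matrix (Fin d) (Fin d) ℂ) = V * 1 * Vᴴ by rw [mul_one, hV1]]
    exact e3 1
  rw [← N1_eq d hd]
  unfold DObs1
  conv_lhs => rw [e2]
  conv_lhs => simp only [e1, e3]
  simp only [Matrix.mul_add, Matrix.add_mul, Matrix.mul_smul, Matrix.smul_mul,
    Finset.mul_sum, Finset.sum_mul]

lemma DObs2_eq (d : ℕ) (hd : 2 ≤ d) (U : M2) (V : Matrix (Fin d) (Fin d) ℂ)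
    (hU : U ∈ Matrix.unitaryGroup (Fin 2) ℂ) (hV : V ∈ Matrix.unitaryGroup (Fin d) ℂ) :
    DObs2 d hd U V = (U ⊗ₖ V) *
      ((2:ℂ) • ((Matrix.single 0 1 1 : M2) ⊗ₖ Matrix.single ⟨1, by omega⟩ ⟨0, by omega⟩ 1
        + (Matrix.single 1 0 1 : M2) ⊗ₖ Matrix.single ⟨0, by omega⟩ ⟨1, by omega⟩ 1))
      * (U ⊗ₖ V)ᴴ := by
  have key : ∀ (A : M2) (B : Matrix (Fin d) (Fin d) ℂ),
      (U * A * Uᴴ) ⊗ₖ (V * B * Vᴴ) = (U ⊗ₖ V) * (A ⊗ₖ B) * (U ⊗ₖ V)ᴴ := fun A B => conj_kron A B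
  have h0 : dA U 0 = U * sig1 * Uᴴ := by simp [dA]
  have h1 : dA U 1 = U * sig2 * Uᴴ := by simp [dA]
  rw [← N2_eq d hd]
  unfold DObs2
  rw [h0, h1, key, key]
  simp only [Matrix.mul_add, Matrix.add_mul]

lemma quad_entry {n : Type} [Fintype n] (A B : Matrix n n ℂ) (p q : n) :
    star (fun r => B r p) ⬝ᵥ A *ᵥ (fun r => B r q) = (Bᴴ * A * B) p q := by
  simp only [dotProduct, Matrix.mulVec, Matrix.mul_apply, Matrix.conjTranspose_apply,
    Pi.star_apply, dotProduct, Finset.sum_mul, Finset.mul_sum]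
  rw [Finset.sum_comm]
  apply Finset.sum_congr rfl
  intro r _
  apply Finset.sum_congr rfl
  intro s _
  ring

lemma PT_quad {d : ℕ} (ρ : Matrix (Fin 2 × Fin d) (Fin 2 × Fin d) ℂ)
    (u1 u2 : Fin 2 → ℂ) (v1 v2 : Fin d → ℂ) :
    star (fun p : Fin 2 × Fin d => u1 p.1 * (starRingEnd ℂ) (v1 p.2)) ⬝ᵥ
      (PT ρ) *ᵥ (fun p : Fin 2 × Fin d => u2 p.1 * (starRingEnd ℂ) (v2 p.2))
    = star (fun p : Fin 2 × Fin d => (starRingEnd ℂ) (u2 p.1) * (starRingEnd ℂ) (v1 p.2)) ⬝ᵥ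
      ρ *ᵥ (fun p : Fin 2 × Fin d => (starRingEnd ℂ) (u1 p.1) * (starRingEnd ℂ) (v2 p.2)) := by
  have h1 : ∀ (G : Fin 2 → Fin d → Fin 2 → Fin d → ℂ),
      (∑ a, ∑ b, ∑ c, ∑ e, G a b c e) = ∑ c, ∑ b, ∑ a, ∑ e, G a b c e := by
    intro G
    rw [Finset.sum_comm]
    rw [show (∑ b : Fin d, ∑ a : Fin 2, ∑ c : Fin 2, ∑ e : Fin d, G a b c e)
        = ∑ b : Fin d, ∑ c : Fin 2, ∑ a : Fin 2, ∑ e : Fin d, G a b c e from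
      Finset.sum_congr rfl fun b _ => Finset.sum_comm]
    rw [Finset.sum_comm]
  simp only [dotProduct, Matrix.mulVec, PT, Pi.star_apply, Fintype.sum_prod_type,
    dotProduct, Finset.sum_mul, Finset.mul_sum]
  rw [h1]
  apply Finset.sum_congr rfl
  intro c _
  apply Finset.sum_congr rfl
  intro b _
  apply Finset.sum_congr rfl
  intro a _
  apply Finset.sum_congr rfl
  intro e _
  simp only [RCLike.star_def, _root_.map_mul, Complex.conj_conj]
  ring

lemma cols_orthonormal_unitary {n : Type} [Fintype n] [DecidableEq n] (B : Matrix n n ℂ)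
    (h : ∀ i j, star (fun r => B r i) ⬝ᵥ (fun r => B r j) = if i = j then (1:ℂ) else 0) :
    B ∈ Matrix.unitaryGroup n ℂ := by
  rw [Matrix.mem_unitaryGroup_iff']
  ext i j
  have := h i j
  simp only [dotProduct, Pi.star_apply] at this
  simp only [Matrix.star_eq_conjTranspose, Matrix.mul_apply, Matrix.conjTranspose_apply]
  rw [Matrix.one_apply]
  exact this

end Aux

/-! ### The key inequality -/

lemma key_ineq (d : ℕ) (hd : 2 ≤ d)
    (ρ : Matrix (Fin 2 × Fin d) (Fin 2 × Fin d) ℂ)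
    (hpsd : ρ.PosSemidef)
    (h : ∀ (U : M2) (V : Matrix (Fin d) (Fin d) ℂ),
        U ∈ Matrix.unitaryGroup (Fin 2) ℂ → V ∈ Matrix.unitaryGroup (Fin d) ℂ →
        Real.sqrt ((expval ρ (DObs1 d hd U V))^2 + (d:ℝ)^2 * (expval ρ (DObs2 d hd U V))^2)
          ≤ expval ρ (DObs0 d hd U V))
    (W1 : M2) (W2 : Matrix (Fin d) (Fin d) ℂ)
    (hW1 : W1 ∈ Matrix.unitaryGroup (Fin 2) ℂ) (hW2 : W2 ∈ Matrix.unitaryGroup (Fin d) ℂ) :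
    (((W1 ⊗ₖ W2)ᴴ * ρ * (W1 ⊗ₖ W2)) ((1:Fin 2), (⟨0, by omega⟩ : Fin d)) ((0:Fin 2), ⟨1, by omega⟩)).re ^ 2
      ≤ (((W1 ⊗ₖ W2)ᴴ * ρ * (W1 ⊗ₖ W2)) ((0:Fin 2), (⟨0, by omega⟩ : Fin d)) ((0:Fin 2), ⟨0, by omega⟩)).re
        * (((W1 ⊗ₖ W2)ᴴ * ρ * (W1 ⊗ₖ W2)) ((1:Fin 2), (⟨1, by omega⟩ : Fin d)) ((1:Fin 2), ⟨1, by omega⟩)).re := by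
  set W : Matrix (Fin 2 × Fin d) (Fin 2 × Fin d) ℂ := W1 ⊗ₖ W2 with hW
  set ρ' : Matrix (Fin 2 × Fin d) (Fin 2 × Fin d) ℂ := Wᴴ * ρ * W with hρ'
  have hρ'psd : ρ'.PosSemidef := hpsd.conjTranspose_mul_mul_same W
  set z0 : Fin d := ⟨0, by omega⟩
  set z1 : Fin d := ⟨1, by omega⟩
  set r0 : ℝ := (ρ' ((0:Fin 2), z0) ((0:Fin 2), z0)).re with hr0def
  set r1 : ℝ := (ρ' ((1:Fin 2), z1) ((1:Fin 2), z1)).re with hr1def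
  set t : ℝ := (ρ' ((1:Fin 2), z0) ((0:Fin 2), z1)).re with htdef
  -- trace juggling
  have hconj : ∀ M : Matrix (Fin 2 × Fin d) (Fin 2 × Fin d) ℂ,
      (ρ * (W * M * Wᴴ)).trace = (ρ' * M).trace := by
    intro M
    rw [hρ']
    rw [show ρ * (W * M * Wᴴ) = (ρ * W * M) * Wᴴ by noncomm_ring]
    rw [Matrix.trace_mul_comm]
    rw [show Wᴴ * (ρ * W * M) = (Wᴴ * ρ * W) * M by noncomm_ring]
  -- diag entries real/nonneg
  have hdiag : ∀ p : Fin 2 × Fin d, 0 ≤ (ρ' p p).re ∧ (ρ' p p).im = 0 := by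
    intro p
    have h2 := hρ'psd.dotProduct_mulVec_nonneg (Pi.single p 1)
    have : star (Pi.single p 1) ⬝ᵥ ρ' *ᵥ (Pi.single p 1) = ρ' p p := by
      simp [Matrix.mulVec_single, dotProduct, Pi.single_apply, apply_ite,
        ite_mul, mul_ite, Finset.sum_ite_eq]
    rw [this] at h2
    rw [Complex.le_def] at h2
    exact ⟨by simpa using h2.1, by simpa using h2.2.symm⟩
  have hherm : ρ' ((0:Fin 2), z1) ((1:Fin 2), z0)
      = (starRingEnd ℂ) (ρ' ((1:Fin 2), z0) ((0:Fin 2), z1)) := by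
    have := hρ'psd.1
    conv_lhs => rw [← this]
    simp [Matrix.conjTranspose_apply]
  -- expectation values
  have hE0 : expval ρ (DObs0 d hd W1 W2) = 2*(d:ℝ)*(r0 + r1) := by
    rw [expval, DObs0_eq d hd W1 W2 hW1 hW2, ← hW, hconj]
    rw [Matrix.mul_smul, Matrix.trace_smul, Matrix.mul_add, Matrix.trace_add,
      trace_mul_kron_std, trace_mul_kron_std]
    rw [show (2*(d:ℂ)) = ((2*(d:ℝ) : ℝ) : ℂ) by push_cast; ring]
    rw [smul_eq_mul, Complex.re_ofReal_mul, Complex.add_re]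
    try ring
  have hE1 : expval ρ (DObs1 d hd W1 W2) = 2*(d:ℝ)*(r0 - r1) := by
    rw [expval, DObs1_eq d hd W1 W2 hW1 hW2, ← hW, hconj]
    rw [Matrix.mul_smul, Matrix.trace_smul, Matrix.mul_sub, Matrix.trace_sub,
      trace_mul_kron_std, trace_mul_kron_std]
    rw [show (2*(d:ℂ)) = ((2*(d:ℝ) : ℝ) : ℂ) by push_cast; ring]
    rw [smul_eq_mul, Complex.re_ofReal_mul, Complex.sub_re]
    try ring
  have hE2 : expval ρ (DObs2 d hd W1 W2) = 2*(t + t) := by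
    rw [expval, DObs2_eq d hd W1 W2 hW1 hW2, ← hW, hconj]
    rw [Matrix.mul_smul, Matrix.trace_smul, Matrix.mul_add, Matrix.trace_add,
      trace_mul_kron_std, trace_mul_kron_std]
    rw [show (2:ℂ) = ((2:ℝ):ℂ) by norm_num]
    rw [smul_eq_mul, Complex.re_ofReal_mul, Complex.add_re, hherm]
    rw [Complex.conj_re]
    try ring
  have hineq := h W1 W2 hW1 hW2
  rw [hE0, hE1, hE2] at hineq
  have hE0nn : 0 ≤ 2*(d:ℝ)*(r0 + r1) := le_trans (Real.sqrt_nonneg _) hineq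
  have hsq : (2*(d:ℝ)*(r0 - r1))^2 + (d:ℝ)^2*(2*(t+t))^2 ≤ (2*(d:ℝ)*(r0 + r1))^2 := by
    have hy : (0:ℝ) ≤ (2*(d:ℝ)*(r0 - r1))^2 + (d:ℝ)^2*(2*(t+t))^2 := by positivity
    calc (2*(d:ℝ)*(r0 - r1))^2 + (d:ℝ)^2*(2*(t+t))^2
        = (Real.sqrt ((2*(d:ℝ)*(r0 - r1))^2 + (d:ℝ)^2*(2*(t+t))^2))^2 := (Real.sq_sqrt hy).symm
      _ ≤ (2*(d:ℝ)*(r0 + r1))^2 := by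
          apply pow_le_pow_left₀ (Real.sqrt_nonneg _) hineq
  have hd2 : (2:ℝ) ≤ (d:ℝ) := by exact_mod_cast hd
  have hd0' : (0:ℝ) < (d:ℝ) := by linarith
  have hd0 : (0:ℝ) < (d:ℝ)^2 := pow_pos hd0' 2
  nlinarith [hsq, hd0]

theorem stmt_17 (d : ℕ) (hd : 2 ≤ d)
    (ρ : Matrix (Fin 2 × Fin d) (Fin 2 × Fin d) ℂ)
    (hpsd : ρ.PosSemidef) (htr : ρ.trace = 1)
    (h : ∀ (U : M2) (V : Matrix (Fin d) (Fin d) ℂ),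
        U ∈ Matrix.unitaryGroup (Fin 2) ℂ → V ∈ Matrix.unitaryGroup (Fin d) ℂ →
        Real.sqrt ((expval ρ (DObs1 d hd U V))^2 + (d:ℝ)^2 * (expval ρ (DObs2 d hd U V))^2)
          ≤ expval ρ (DObs0 d hd U V)) :
    (PT ρ).PosSemidef := by
  classical
  have hherm : (PT ρ).IsHermitian := by
    have hρh := hpsd.1
    ext p q
    rw [Matrix.conjTranspose_apply]
    show star (ρ (p.1, q.2) (q.1, p.2)) = ρ (q.1, p.2) (p.1, q.2)
    have h2 := congrFun (congrFun hρh (q.1, p.2)) (p.1, q.2)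
    rw [Matrix.conjTranspose_apply] at h2
    exact h2
  rw [Matrix.posSemidef_iff_dotProduct_mulVec]
  refine ⟨hherm, fun x => ?_⟩
  -- Schmidt / singular value decomposition of x
  set X : Matrix (Fin 2) (Fin d) ℂ := Matrix.of (fun a b => x (a, b)) with hXdef
  have hXpsd : (X * Xᴴ).PosSemidef := Matrix.posSemidef_self_mul_conjTranspose X
  have hH : (X * Xᴴ).IsHermitian := hXpsd.isHermitian
  set μ : Fin 2 → ℝ := hH.eigenvalues with hμdef
  have hμ0 : ∀ i, 0 ≤ μ i := fun i => hXpsd.eigenvalues_nonneg i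
  set u : Fin 2 → (Fin 2 → ℂ) := fun i => ⇑(hH.eigenvectorBasis i) with hudef
  have huortho : ∀ i j, star (u i) ⬝ᵥ u j = if i = j then (1:ℂ) else 0 := by
    intro i j
    have h2 := (orthonormal_iff_ite.mp hH.eigenvectorBasis.orthonormal) i j
    rw [PiLp.inner_apply] at h2
    simpa [dotProduct, RCLike.inner_apply, hudef, mul_comm] using h2
  set w : Fin 2 → (Fin d → ℂ) := fun i => Xᴴ *ᵥ u i with hwdef
  have hwdot : ∀ i j, star (w i) ⬝ᵥ w j = if i = j then ((μ j : ℝ) : ℂ) else 0 := by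
    intro i j
    rw [hwdef]
    simp only
    rw [Matrix.star_mulVec, Matrix.conjTranspose_conjTranspose, ← dotProduct_mulVec,
      Matrix.mulVec_mulVec]
    rw [show (X * Xᴴ) *ᵥ u j = μ j • u j from hH.mulVec_eigenvectorBasis j]
    rw [dotProduct_smul, huortho i j]
    split_ifs <;> simp [Complex.real_smul]
  have hw0 : ∀ i, μ i = 0 → w i = 0 := by
    intro i h0
    have h2 := hwdot i i
    rw [if_pos rfl, h0] at h2
    exact dotProduct_star_self_eq_zero.mp (by simpa using h2)
  set α : Fin 2 → ℝ := fun i => Real.sqrt (μ i) with hαdef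
  have hα0 : ∀ i, 0 ≤ α i := fun i => Real.sqrt_nonneg _
  have hαsq : ∀ i, (α i)^2 = μ i := fun i => Real.sq_sqrt (hμ0 i)
  -- orthonormal extension on the d-dimensional side
  set s : Set (Fin d) := {j | ∃ h2 : (j:ℕ) < 2, μ ⟨(j:ℕ), h2⟩ ≠ 0} with hsdef
  set vv : Fin d → EuclideanSpace ℂ (Fin d) := fun j =>
    if h2 : (j:ℕ) < 2 then WithLp.toLp 2 ((((α ⟨(j:ℕ), h2⟩)⁻¹ : ℝ) : ℂ) • (w ⟨(j:ℕ), h2⟩)) else 0 with hvvdef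
  have hsv : Orthonormal ℂ (s.restrict vv) := by
    rw [orthonormal_iff_ite]
    rintro ⟨i, hi2, hiμ⟩ ⟨j, hj2, hjμ⟩
    have hinner : (inner ℂ (vv i) (vv j) : ℂ)
        = (((α ⟨(i:ℕ), hi2⟩)⁻¹ : ℝ) : ℂ) * (((α ⟨(j:ℕ), hj2⟩)⁻¹ : ℝ) : ℂ)
          * (if (⟨(i:ℕ), hi2⟩ : Fin 2) = ⟨(j:ℕ), hj2⟩ then ((μ ⟨(j:ℕ), hj2⟩ : ℝ):ℂ) else 0) := by
      rw [PiLp.inner_apply]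
      simp only [hvvdef, dif_pos hi2, dif_pos hj2]
      have h2 := hwdot ⟨(i:ℕ), hi2⟩ ⟨(j:ℕ), hj2⟩
      simp only [dotProduct, Pi.star_apply] at h2
      rw [← h2]
      rw [Finset.mul_sum]
      apply Finset.sum_congr rfl
      intro k _
      simp only [RCLike.inner_apply, Pi.smul_apply, smul_eq_mul, _root_.map_mul,
        Complex.conj_ofReal, Pi.star_apply, RCLike.star_def]
      ring
    show inner ℂ (vv i) (vv j) = _
    rw [hinner]
    by_cases hij : i = j
    · subst hij
      rw [if_pos rfl, if_pos rfl]
      have hμpos : 0 < μ ⟨(i:ℕ), hi2⟩ := lt_of_le_of_ne (hμ0 _) (Ne.symm hiμ)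
      have hαpos : 0 < α ⟨(i:ℕ), hi2⟩ := Real.sqrt_pos.mpr hμpos
      rw [← Complex.ofReal_mul, ← Complex.ofReal_mul, show ((1:ℂ) = ((1:ℝ):ℂ)) by norm_num]
      congr 1
      have hαa := hαsq ⟨(i:ℕ), hi2⟩
      rw [pow_two] at hαa
      field_simp
      linarith [hαa]
    · have h2 : ¬ ((⟨(i:ℕ), hi2⟩ : Fin 2) = ⟨(j:ℕ), hj2⟩) := by
        intro hc
        exact hij (Fin.ext (by simpa [Fin.ext_iff] using hc))
      rw [if_neg h2]
      simp only [mul_zero]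
      rw [if_neg (by simpa [Subtype.mk.injEq] using hij)]
  obtain ⟨bb, hbb⟩ := hsv.exists_orthonormalBasis_extension_of_card_eq (by simp)
  set gd : Fin 2 → Fin d := fun i => ⟨(i:ℕ), lt_of_lt_of_le i.isLt hd⟩ with hgddef
  set fv : Fin 2 → (Fin d → ℂ) := fun i => ⇑(bb (gd i)) with hfvdef
  have hbbortho : ∀ p q : Fin d, star (⇑(bb p) : Fin d → ℂ) ⬝ᵥ ⇑(bb q) = if p = q then (1:ℂ) else 0 := by
    intro p q
    have h2 := (orthonormal_iff_ite.mp bb.orthonormal) p q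
    rw [PiLp.inner_apply] at h2
    simpa [dotProduct, RCLike.inner_apply, mul_comm] using h2
  have hwfv : ∀ i : Fin 2, w i = ((α i : ℝ) : ℂ) • fv i := by
    intro i
    by_cases h0 : μ i = 0
    · rw [hw0 i h0, hαdef]
      simp [h0]
    · have hjlt : ((gd i : Fin d) : ℕ) < 2 := i.isLt
      have hidx : (⟨((gd i : Fin d) : ℕ), hjlt⟩ : Fin 2) = i := Fin.ext rfl
      have hjs : (gd i) ∈ s := by
        rw [hsdef]
        exact ⟨hjlt, by rw [hidx]; exact h0⟩
      have hbbj := hbb _ hjs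
      rw [hfvdef]
      simp only
      have hαne : α i ≠ 0 := by
        have hμpos : 0 < μ i := lt_of_le_of_ne (hμ0 _) (Ne.symm h0)
        exact ne_of_gt (Real.sqrt_pos.mpr hμpos)
      rw [hbbj, hvvdef]
      simp only [dif_pos hjlt]
      rw [hidx]
      show w i = ((α i : ℝ) : ℂ) • (((α i)⁻¹ : ℝ) : ℂ) • w i
      rw [smul_smul, ← Complex.ofReal_mul, mul_inv_cancel₀ hαne]
      norm_num
  -- completeness of the eigenbasis
  have hcomp : ∀ a c : Fin 2, ∑ i, u i a * (starRingEnd ℂ) (u i c) = if a = c then (1:ℂ) else 0 := by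
    intro a c
    have hUmat : (Matrix.of fun r c' => u c' r) ∈ Matrix.unitaryGroup (Fin 2) ℂ := by
      apply cols_orthonormal_unitary
      intro i j
      simpa [dotProduct] using huortho i j
    have h1 : (Matrix.of fun r c' => u c' r) * star (Matrix.of fun r c' => u c' r) = 1 :=
      Matrix.mem_unitaryGroup_iff.mp hUmat
    have h2 := congrFun (congrFun h1 a) c
    simp only [Matrix.mul_apply, Matrix.star_apply, Matrix.of_apply, Matrix.one_apply] at h2
    simpa using h2
  -- decomposition of x
  have hxab : ∀ (a : Fin 2) (b : Fin d),
      x (a, b) = ∑ i : Fin 2, ((α i : ℝ) : ℂ) * (u i a * (starRingEnd ℂ) (fv i b)) := by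
    intro a b
    have step1 : ∑ i : Fin 2, ((α i : ℝ) : ℂ) * (u i a * (starRingEnd ℂ) (fv i b))
        = ∑ i : Fin 2, u i a * (starRingEnd ℂ) (w i b) := by
      apply Finset.sum_congr rfl
      intro i _
      rw [hwfv i]
      simp only [Pi.smul_apply, smul_eq_mul, _root_.map_mul, Complex.conj_ofReal]
      ring
    have step2 : ∀ i, (starRingEnd ℂ) (w i b) = ∑ c, X c b * (starRingEnd ℂ) (u i c) := by
      intro i
      rw [hwdef]
      simp only [Matrix.mulVec, dotProduct, Matrix.conjTranspose_apply, RCLike.star_def]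
      rw [_root_.map_sum]
      apply Finset.sum_congr rfl
      intro c _
      rw [_root_.map_mul, Complex.conj_conj]
    rw [step1]
    symm
    calc ∑ i : Fin 2, u i a * (starRingEnd ℂ) (w i b)
        = ∑ i : Fin 2, ∑ c : Fin 2, X c b * (u i a * (starRingEnd ℂ) (u i c)) := by
          apply Finset.sum_congr rfl
          intro i _
          rw [step2 i, Finset.mul_sum]
          apply Finset.sum_congr rfl
          intro c _
          ring
      _ = ∑ c : Fin 2, X c b * ∑ i : Fin 2, u i a * (starRingEnd ℂ) (u i c) := by
          rw [Finset.sum_comm]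
          apply Finset.sum_congr rfl
          intro c _
          rw [Finset.mul_sum]
      _ = ∑ c : Fin 2, X c b * (if a = c then (1:ℂ) else 0) := by
          apply Finset.sum_congr rfl
          intro c _
          rw [hcomp a c]
      _ = X a b := by simp [mul_ite, Finset.sum_ite_eq]
      _ = x (a, b) := rfl
  set y : Fin 2 → (Fin 2 × Fin d → ℂ) := fun i p => u i p.1 * (starRingEnd ℂ) (fv i p.2) with hydef
  have hxy : x = ((α 0 : ℝ) : ℂ) • y 0 + ((α 1 : ℝ) : ℂ) • y 1 := by
    funext p
    rcases p with ⟨a, b⟩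
    rw [hxab a b, Fin.sum_univ_two]
    simp [hydef]
  -- the conjugated unitaries
  set Uc : M2 := Matrix.of (fun r c => (starRingEnd ℂ) (u c r)) with hUcdef
  set Vc : Matrix (Fin d) (Fin d) ℂ := Matrix.of (fun r c => (starRingEnd ℂ) (bb c r)) with hVcdef
  have conj_ite : ∀ (P : Prop) [Decidable P],
      (starRingEnd ℂ) (if P then (1:ℂ) else 0) = if P then (1:ℂ) else 0 := by
    intro P _
    split_ifs <;> simp
  have hUc : Uc ∈ Matrix.unitaryGroup (Fin 2) ℂ := by
    apply cols_orthonormal_unitary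
    intro i j
    have h2 := huortho i j
    simp only [dotProduct, Pi.star_apply] at h2 ⊢
    simp only [hUcdef, Matrix.of_apply, RCLike.star_def, Complex.conj_conj]
    calc ∑ r, u i r * (starRingEnd ℂ) (u j r)
        = (starRingEnd ℂ) (∑ r, (starRingEnd ℂ) (u i r) * u j r) := by
          rw [_root_.map_sum]
          apply Finset.sum_congr rfl
          intro r _
          rw [_root_.map_mul, Complex.conj_conj]
          try ring
      _ = if i = j then (1:ℂ) else 0 := by
          simp only [RCLike.star_def] at h2
          rw [h2]; split_ifs <;> simp
  have hVc : Vc ∈ Matrix.unitaryGroup (Fin d) ℂ := by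
    apply cols_orthonormal_unitary
    intro i j
    have h2 := hbbortho i j
    simp only [dotProduct, Pi.star_apply] at h2 ⊢
    simp only [hVcdef, Matrix.of_apply, RCLike.star_def, Complex.conj_conj]
    calc ∑ r, bb i r * (starRingEnd ℂ) (bb j r)
        = (starRingEnd ℂ) (∑ r, (starRingEnd ℂ) (bb i r) * bb j r) := by
          rw [_root_.map_sum]
          apply Finset.sum_congr rfl
          intro r _
          rw [_root_.map_mul, Complex.conj_conj]
          try ring
      _ = if i = j then (1:ℂ) else 0 := by
          simp only [RCLike.star_def] at h2
          have h3 : (∑ r, (starRingEnd ℂ) (bb i r) * bb j r) = if i = j then (1:ℂ) else 0 := h2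
          rw [h3]; split_ifs <;> simp
  set Wm : Matrix (Fin 2 × Fin d) (Fin 2 × Fin d) ℂ := Uc ⊗ₖ Vc with hWmdef
  set ρ' : Matrix (Fin 2 × Fin d) (Fin 2 × Fin d) ℂ := Wmᴴ * ρ * Wm with hρ'def
  -- pairwise quadratic forms
  have hpair : ∀ i j : Fin 2, star (y i) ⬝ᵥ (PT ρ) *ᵥ y j = ρ' (j, gd i) (i, gd j) := by
    intro i j
    have hyi : y i = fun p : Fin 2 × Fin d => u i p.1 * (starRingEnd ℂ) (fv i p.2) := rfl
    have hyj : y j = fun p : Fin 2 × Fin d => u j p.1 * (starRingEnd ℂ) (fv j p.2) := rfl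
    rw [hyi, hyj, PT_quad ρ (u i) (u j) (fv i) (fv j)]
    have hcol1 : (fun p : Fin 2 × Fin d => (starRingEnd ℂ) (u j p.1) * (starRingEnd ℂ) (fv i p.2))
        = fun p => Wm p (j, gd i) := by
      funext p
      simp [hWmdef, kroneckerMap_apply, hUcdef, hVcdef, hfvdef]
    have hcol2 : (fun p : Fin 2 × Fin d => (starRingEnd ℂ) (u i p.1) * (starRingEnd ℂ) (fv j p.2))
        = fun p => Wm p (i, gd j) := by
      funext p
      simp [hWmdef, kroneckerMap_apply, hUcdef, hVcdef, hfvdef]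
    rw [hcol1, hcol2]
    exact quad_entry ρ Wm (j, gd i) (i, gd j)
  -- expansion of the quadratic form
  have hexpand : star x ⬝ᵥ (PT ρ) *ᵥ x
      = ((α 0 : ℝ) : ℂ) * ((α 0 : ℝ) : ℂ) * (star (y 0) ⬝ᵥ (PT ρ) *ᵥ y 0)
        + ((α 0 : ℝ) : ℂ) * ((α 1 : ℝ) : ℂ) * (star (y 0) ⬝ᵥ (PT ρ) *ᵥ y 1)
        + ((α 1 : ℝ) : ℂ) * ((α 0 : ℝ) : ℂ) * (star (y 1) ⬝ᵥ (PT ρ) *ᵥ y 0)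
        + ((α 1 : ℝ) : ℂ) * ((α 1 : ℝ) : ℂ) * (star (y 1) ⬝ᵥ (PT ρ) *ᵥ y 1) := by
    rw [hxy]
    simp only [star_add, star_smul, Matrix.mulVec_add, Matrix.mulVec_smul, add_dotProduct,
      dotProduct_add, smul_dotProduct, dotProduct_smul, smul_eq_mul, RCLike.star_def,
      Complex.conj_ofReal]
    ring
  -- the key inequality for this choice of unitaries
  have hkey := key_ineq d hd ρ hpsd h Uc Vc hUc hVc
  have hg0 : gd 0 = (⟨0, by omega⟩ : Fin d) := Fin.ext (by simp [hgddef])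
  have hg1 : gd 1 = (⟨1, by omega⟩ : Fin d) := Fin.ext (by simp [hgddef])
  have hρ'psd : ρ'.PosSemidef := hpsd.conjTranspose_mul_mul_same Wm
  have hρ'herm : ρ'.IsHermitian := hρ'psd.isHermitian
  set r0 : ℝ := (ρ' ((0:Fin 2), gd 0) ((0:Fin 2), gd 0)).re with hr0def
  set r1 : ℝ := (ρ' ((1:Fin 2), gd 1) ((1:Fin 2), gd 1)).re with hr1def
  set t : ℝ := (ρ' ((1:Fin 2), gd 0) ((0:Fin 2), gd 1)).re with htdef
  have hkey' : t^2 ≤ r0 * r1 := by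
    rw [hr0def, hr1def, htdef, hg0, hg1]
    exact hkey
  have hdiagnn : ∀ p : Fin 2 × Fin d, 0 ≤ (ρ' p p).re ∧ (ρ' p p).im = 0 := by
    intro p
    have h2 := hρ'psd.dotProduct_mulVec_nonneg (Pi.single p 1)
    have h3 : star (Pi.single p 1) ⬝ᵥ ρ' *ᵥ (Pi.single p 1) = ρ' p p := by
      simp [Matrix.mulVec_single, dotProduct, Pi.single_apply, apply_ite,
        ite_mul, mul_ite, Finset.sum_ite_eq]
    rw [h3] at h2
    rw [Complex.le_def] at h2
    exact ⟨by simpa using h2.1, by simpa using h2.2.symm⟩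
  have hr0nn : 0 ≤ r0 := (hdiagnn _).1
  have hr1nn : 0 ≤ r1 := (hdiagnn _).1
  have hdiag0 : ρ' ((0:Fin 2), gd 0) ((0:Fin 2), gd 0) = ((r0 : ℝ) : ℂ) := by
    have him := (hdiagnn ((0:Fin 2), gd 0)).2
    apply Complex.ext
    · simp [hr0def]
    · simp [him]
  have hdiag1 : ρ' ((1:Fin 2), gd 1) ((1:Fin 2), gd 1) = ((r1 : ℝ) : ℂ) := by
    have him := (hdiagnn ((1:Fin 2), gd 1)).2
    apply Complex.ext
    · simp [hr1def]
    · simp [him]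
  have hcross : ρ' ((0:Fin 2), gd 1) ((1:Fin 2), gd 0)
      = (starRingEnd ℂ) (ρ' ((1:Fin 2), gd 0) ((0:Fin 2), gd 1)) := by
    conv_lhs => rw [← hρ'herm]
    simp [Matrix.conjTranspose_apply]
  have hform : star x ⬝ᵥ (PT ρ) *ᵥ x
      = (((α 0)^2 * r0 + (α 1)^2 * r1 + 2 * (α 0) * (α 1) * t : ℝ) : ℂ) := by
    rw [hexpand, hpair 0 0, hpair 0 1, hpair 1 0, hpair 1 1, hdiag0, hdiag1, hcross]
    have hconj := Complex.add_conj (ρ' ((1:Fin 2), gd 0) ((0:Fin 2), gd 1))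
    rw [← htdef] at hconj
    push_cast at hconj ⊢
    linear_combination (((α 0 : ℝ) : ℂ) * ((α 1 : ℝ) : ℂ)) * hconj
  rw [hform]
  rw [Complex.zero_le_real]
  have hs2 : (Real.sqrt r0 * Real.sqrt r1)^2 = r0 * r1 := by
    rw [mul_pow, Real.sq_sqrt hr0nn, Real.sq_sqrt hr1nn]
  have hts : 0 ≤ t + Real.sqrt r0 * Real.sqrt r1 := by
    nlinarith [hs2, hkey', Real.sqrt_nonneg r0, Real.sqrt_nonneg r1,
      mul_nonneg (Real.sqrt_nonneg r0) (Real.sqrt_nonneg r1)]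
  nlinarith [sq_nonneg (α 0 * Real.sqrt r0 - α 1 * Real.sqrt r1),
    mul_nonneg (mul_nonneg (hα0 0) (hα0 1)) hts, hs2, hα0 0, hα0 1,
    Real.sq_sqrt hr0nn, Real.sq_sqrt hr1nn,
    mul_nonneg (Real.sqrt_nonneg r0) (Real.sqrt_nonneg r1)]
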